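/- Let $(\Sigma, \mu)$ be a finite probability space, $n \in \mathbb{N}$, let $\mathcal{R}$ be an $(m, \epsilon)$-generalized random restriction over $\Sigma^n$, and let $E \subseteq \Sigma^n$ be an event with $\Pr_{\mu^{\otimes n}}[E] > \epsilon$. Define the conditional generalized restriction $\mathcal{R}|E$ by $(\mathcal{R}|E)[\rho] = \frac{\Pr[E | E_\rho] \cdot \mathcal{R}[\rho]}{\mathbb{E}_{\rho' \sim \mathcal{R}}[\Pr[E | E_{\rho'}]]}$. Then for every $\rho$: $\left|(\mathcal{R}|E)[\rho] - \frac{\Pr[E|E_\rho] \cdot \mathcal{R}[\rho]}{\Pr[E]}\right| \le (\mathcal{R}|E)[\rho] \cdot \frac{\epsilon}{\Pr[E]}$; moreover $\left\| \mathbb{E}_{\rho \sim \mathcal{R}|E}[\mu^{\otimes n} | E_\rho, E] - (\mu^{\otimes n} | E) \right\|_1 \le \frac{2\epsilon}{\Pr[E]}$. -/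

import Mathlib

/-- A generalized restriction `ρ = (T₁, …, T_m, I, z)` on `Σ^n`: the nonempty sets
`T₁, …, T_m` together with `I` form a disjoint partition of `[n]`, and `z` records the
fixed values on `I` (only the values of `z` on `I` are relevant). -/
structure GenRestr (Sig : Type*) (n : ℕ) where
  m : ℕ
  T : Fin m → Finset (Fin n)
  I : Finset (Fin n)
  z : Fin n → Sig
  hT : ∀ j, (T j).Nonempty
  hdisj : ∀ j j', j ≠ j' → Disjoint (T j) (T j')
  hdisjI : ∀ j, Disjoint (T j) I
  hcover : ∀ i : Fin n, i ∈ I ∨ ∃ j, i ∈ T j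

/-- The event `E_ρ ⊆ Σ^n` of a generalized restriction: all coordinates inside each class
`T_j` agree, and the coordinates in `I` take the prescribed values. -/
def GenRestr.event {Sig : Type*} {n : ℕ} (ρ : GenRestr Sig n) : Set (Fin n → Sig) :=
  {x | (∀ j, ∀ i ∈ ρ.T j, ∀ i' ∈ ρ.T j, x i = x i') ∧ ∀ i ∈ ρ.I, x i = ρ.z i}

open Classical in
/-- The probability of an event `A ⊆ Σ^n` under the product measure `μ^{⊗n}`. -/
noncomputable def prOf {Sig : Type*} [Fintype Sig] {n : ℕ} (μ : Sig → ℝ)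
    (A : Set (Fin n → Sig)) : ℝ :=
  ∑ x : Fin n → Sig, if x ∈ A then ∏ i, μ (x i) else 0

open Classical in
/-- The conditional distribution `μ^{⊗n} | A` evaluated at `x`. -/
noncomputable def condDist {Sig : Type*} [Fintype Sig] {n : ℕ} (μ : Sig → ℝ)
    (A : Set (Fin n → Sig)) (x : Fin n → Sig) : ℝ :=
  (if x ∈ A then ∏ i, μ (x i) else 0) / prOf μ A

-- auxiliary lemmas
lemma prOf_nonneg {Sig : Type*} [Fintype Sig] {n : ℕ} (μ : Sig → ℝ)
    (hμ0 : ∀ a, 0 ≤ μ a) (A : Set (Fin n → Sig)) : 0 ≤ prOf μ A := by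
  classical
  unfold prOf
  apply Finset.sum_nonneg
  intro x _
  split
  · exact Finset.prod_nonneg fun i _ => hμ0 _
  · exact le_rfl

lemma condDist_nonneg {Sig : Type*} [Fintype Sig] {n : ℕ} (μ : Sig → ℝ)
    (hμ0 : ∀ a, 0 ≤ μ a) (A : Set (Fin n → Sig)) (x : Fin n → Sig) :
    0 ≤ condDist μ A x := by
  classical
  unfold condDist
  apply div_nonneg _ (prOf_nonneg μ hμ0 A)
  split
  · exact Finset.prod_nonneg fun i _ => hμ0 _
  · exact le_rfl

lemma prOf_event_zero {Sig : Type*} [Fintype Sig] {n : ℕ} (μ : Sig → ℝ)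
    (hμ0 : ∀ a, 0 ≤ μ a) {A : Set (Fin n → Sig)} (h : prOf μ A = 0) :
    ∀ x : Fin n → Sig, x ∈ A → ∏ i, μ (x i) = 0 := by
  classical
  intro x hx
  unfold prOf at h
  have h' := (Finset.sum_eq_zero_iff_of_nonneg (fun y _ => by
    split
    · exact Finset.prod_nonneg fun i _ => hμ0 _
    · exact le_rfl)).mp h x (Finset.mem_univ x)
  simpa [hx] using h'

lemma prOf_inter_zero {Sig : Type*} [Fintype Sig] {n : ℕ} (μ : Sig → ℝ)
    (hμ0 : ∀ a, 0 ≤ μ a) (E : Set (Fin n → Sig)) {A : Set (Fin n → Sig)}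
    (h : prOf μ A = 0) : prOf μ (E ∩ A) = 0 := by
  classical
  unfold prOf
  apply Finset.sum_eq_zero
  intro x _
  split_ifs with hx
  · exact prOf_event_zero μ hμ0 h x hx.2
  · rfl

open Classical in
lemma sum_ind_cond {Sig : Type*} [Fintype Sig] {n : ℕ} (μ : Sig → ℝ)
    (E A : Set (Fin n → Sig)) :
    ∑ x : Fin n → Sig, (if x ∈ E then condDist μ A x else 0)
      = prOf μ (E ∩ A) / prOf μ A := by
  classical
  unfold condDist
  conv_rhs => rw [prOf, Finset.sum_div]
  apply Finset.sum_congr rfl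
  intro x _
  by_cases hE : x ∈ E <;> by_cases hA : x ∈ A <;>
    simp [hE, hA, Set.mem_inter_iff]

lemma part1_aux (q S P ε : ℝ) (hq : 0 ≤ q) (hS : 0 < S) (hP : 0 < P)
    (hSP : |S - P| ≤ ε) : |q / S - q / P| ≤ q / S * (ε / P) := by
  have h1 : q / S - q / P = q / S * ((P - S) / P) := by
    field_simp
  rw [h1, abs_mul, abs_of_nonneg (div_nonneg hq hS.le), abs_div, abs_of_pos hP]
  refine mul_le_mul_of_nonneg_left ?_ (div_nonneg hq hS.le)
  gcongr
  rwa [abs_sub_comm]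

lemma abs_div_sub_div_le' (f gx S P : ℝ) (hf : 0 ≤ f) (hS : 0 < S) (hP : 0 < P) :
    |f / S - gx / P| ≤ f * (|P - S| / (S * P)) + |f - gx| / P := by
  have h1 : f / S - gx / P = f * (P - S) / (S * P) + (f - gx) / P := by
    field_simp
    ring
  rw [h1]
  refine (abs_add_le _ _).trans ?_
  rw [abs_div, abs_mul, abs_of_nonneg hf, abs_of_pos (mul_pos hS hP), abs_div,
    abs_of_pos hP, mul_div_assoc]

open Classical in
lemma term_eq {Sig : Type*} [Fintype Sig] {n : ℕ} (μ : Sig → ℝ)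
    (hμ0 : ∀ a, 0 ≤ μ a) (E A : Set (Fin n → Sig)) (wa S : ℝ) (x : Fin n → Sig) :
    wa * (prOf μ (E ∩ A) / prOf μ A) / S * condDist μ (E ∩ A) x
      = (if x ∈ E then wa * condDist μ A x else 0) / S := by
  classical
  rw [div_mul_eq_mul_div]
  congr 1
  unfold condDist
  by_cases hxE : x ∈ E
  · by_cases hxA : x ∈ A
    · have hmem : x ∈ E ∩ A := ⟨hxE, hxA⟩
      by_cases h0 : prOf μ (E ∩ A) = 0
      · have hg0 : ∏ i, μ (x i) = 0 := prOf_event_zero μ hμ0 h0 x hmem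
        simp [hxE, hxA, hmem, h0, hg0]
      · have hA0 : prOf μ A ≠ 0 := fun h => h0 (prOf_inter_zero μ hμ0 E h)
        simp only [hxE, hxA, hmem, if_true, if_pos]
        field_simp
    · have hmem : x ∉ E ∩ A := fun h => hxA h.2
      simp [hxE, hxA, hmem]
  · have hmem : x ∉ E ∩ A := fun h => hxE h.1
    simp [hxE, hmem]

/-- Let `𝓡` be an `(m, ε)`-generalized random restriction (a finitely
supported distribution `w` on generalized restrictions `R a`, each with at least `m` free
coordinates, whose average conditional distribution is `ε`-close to `μ^{⊗n}` in `ℓ¹`), and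
let `E` be an event with `Pr[E] > ε`. Defining the conditional generalized random
restriction `(𝓡|E)[ρ] = Pr[E|E_ρ]·𝓡[ρ] / 𝔼_{ρ'}[Pr[E|E_{ρ'}]]`, we have for every `ρ`:
`|(𝓡|E)[ρ] - Pr[E|E_ρ]·𝓡[ρ]/Pr[E]| ≤ (𝓡|E)[ρ]·ε/Pr[E]`, and moreover
`‖𝔼_{ρ∼𝓡|E}[μ^{⊗n}|E_ρ, E] - (μ^{⊗n}|E)‖₁ ≤ 2ε/Pr[E]`. -/
theorem conditional_generalized_random_restriction_properties
    {Sig : Type*} [Fintype Sig] {n : ℕ} (μ : Sig → ℝ)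
    (hμ0 : ∀ a, 0 ≤ μ a) (hμ1 : ∑ a, μ a = 1)
    {ι : Type*} [Fintype ι] (w : ι → ℝ) (hw0 : ∀ a, 0 ≤ w a) (hw1 : ∑ a, w a = 1)
    (R : ι → GenRestr Sig n) (m : ℕ) (ε : ℝ) (hε : 0 ≤ ε)
    (hfree : ∀ a, m ≤ (R a).m)
    (hR : ∑ x : Fin n → Sig,
        |∑ a, w a * condDist μ (R a).event x - ∏ i, μ (x i)| ≤ ε)
    (E : Set (Fin n → Sig)) (hE : ε < prOf μ E) :
    (∀ a : ι,
      |w a * (prOf μ (E ∩ (R a).event) / prOf μ (R a).event) /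
          (∑ b, w b * (prOf μ (E ∩ (R b).event) / prOf μ (R b).event))
        - (prOf μ (E ∩ (R a).event) / prOf μ (R a).event) * w a / prOf μ E|
        ≤ (w a * (prOf μ (E ∩ (R a).event) / prOf μ (R a).event) /
            (∑ b, w b * (prOf μ (E ∩ (R b).event) / prOf μ (R b).event)))
            * (ε / prOf μ E)) ∧
    ∑ x : Fin n → Sig,
      |(∑ a, (w a * (prOf μ (E ∩ (R a).event) / prOf μ (R a).event) /
              (∑ b, w b * (prOf μ (E ∩ (R b).event) / prOf μ (R b).event)))
            * condDist μ (E ∩ (R a).event) x)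
        - condDist μ E x| ≤ 2 * ε / prOf μ E := by
  classical
  set P := prOf μ E with hPdef
  have hP0 : 0 < P := lt_of_le_of_lt hε hE
  set S := ∑ b, w b * (prOf μ (E ∩ (R b).event) / prOf μ (R b).event) with hSdef
  set f : (Fin n → Sig) → ℝ := fun x => ∑ a, w a * condDist μ (R a).event x with hfdef
  have hfnn : ∀ x, 0 ≤ f x := fun x =>
    Finset.sum_nonneg fun a _ => mul_nonneg (hw0 a) (condDist_nonneg μ hμ0 _ x)
  -- sum over E of f equals S
  have hsumEf : ∑ x : Fin n → Sig, (if x ∈ E then f x else 0) = S := by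
    calc ∑ x : Fin n → Sig, (if x ∈ E then f x else 0)
        = ∑ x : Fin n → Sig, ∑ a,
            (if x ∈ E then w a * condDist μ (R a).event x else 0) := by
          apply Finset.sum_congr rfl
          intro x _
          split <;> simp [hfdef, *]
      _ = ∑ a, ∑ x : Fin n → Sig,
            (if x ∈ E then w a * condDist μ (R a).event x else 0) :=
          Finset.sum_comm
      _ = S := by
          rw [hSdef]
          apply Finset.sum_congr rfl
          intro a _
          have h1 : ∀ x : Fin n → Sig,
              (if x ∈ E then w a * condDist μ (R a).event x else 0)
                = w a * (if x ∈ E then condDist μ (R a).event x else 0) := by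
            intro x; split <;> simp
          simp_rw [h1, ← Finset.mul_sum, sum_ind_cond μ E (R a).event]
  -- sum over E of g equals P
  have hsumEg : ∑ x : Fin n → Sig, (if x ∈ E then ∏ i, μ (x i) else 0) = P := rfl
  -- |S - P| ≤ ε
  have hSP : |S - P| ≤ ε := by
    have hdiff : S - P = ∑ x : Fin n → Sig,
        (if x ∈ E then f x - ∏ i, μ (x i) else 0) := by
      rw [← hsumEf, ← hsumEg, ← Finset.sum_sub_distrib]
      apply Finset.sum_congr rfl
      intro x _
      split <;> simp
    rw [hdiff]
    refine (Finset.abs_sum_le_sum_abs _ _).trans ?_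
    refine le_trans ?_ hR
    apply Finset.sum_le_sum
    intro x _
    split
    · exact le_rfl
    · simp [abs_nonneg]
  have hS0 : 0 < S := by
    have := abs_le.mp hSP
    linarith [this.1]
  constructor
  · intro a
    rw [mul_comm (prOf μ (E ∩ (R a).event) / prOf μ (R a).event) (w a)]
    exact part1_aux _ _ _ _
      (mul_nonneg (hw0 a) (div_nonneg (prOf_nonneg μ hμ0 _) (prOf_nonneg μ hμ0 _)))
      hS0 hP0 hSP
  · have key : ∀ x : Fin n → Sig,
        (∑ a, w a * (prOf μ (E ∩ (R a).event) / prOf μ (R a).event) / S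
            * condDist μ (E ∩ (R a).event) x)
          = (if x ∈ E then f x else 0) / S := by
      intro x
      have h1 : ∀ a : ι, w a * (prOf μ (E ∩ (R a).event) / prOf μ (R a).event) / S
            * condDist μ (E ∩ (R a).event) x
          = (if x ∈ E then w a * condDist μ (R a).event x else 0) / S :=
        fun a => term_eq μ hμ0 E (R a).event (w a) S x
      simp_rw [h1, ← Finset.sum_div]
      congr 1
      split <;> simp [hfdef, *]
    have hcdE : ∀ x : Fin n → Sig,
        condDist μ E x = (if x ∈ E then ∏ i, μ (x i) else 0) / P := fun _ => rfl
    calc ∑ x : Fin n → Sig,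
          |(∑ a, w a * (prOf μ (E ∩ (R a).event) / prOf μ (R a).event) / S
              * condDist μ (E ∩ (R a).event) x) - condDist μ E x|
        = ∑ x : Fin n → Sig,
            |(if x ∈ E then f x else 0) / S
              - (if x ∈ E then ∏ i, μ (x i) else 0) / P| := by
          apply Finset.sum_congr rfl
          intro x _
          rw [key x, hcdE x]
      _ ≤ ∑ x : Fin n → Sig,
            ((if x ∈ E then f x else 0) * (|P - S| / (S * P))
              + (if x ∈ E then |f x - ∏ i, μ (x i)| else 0) / P) := by
          apply Finset.sum_le_sum
          intro x _
          by_cases hx : x ∈ E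
          · simp only [hx, if_true]
            exact abs_div_sub_div_le' _ _ _ _ (hfnn x) hS0 hP0
          · simp [hx]
      _ = S * (|P - S| / (S * P))
            + (∑ x : Fin n → Sig, (if x ∈ E then |f x - ∏ i, μ (x i)| else 0)) / P := by
          rw [Finset.sum_add_distrib, ← Finset.sum_mul, hsumEf, Finset.sum_div]
      _ ≤ ε / P + ε / P := by
          have h2 : S * (|P - S| / (S * P)) = |P - S| / P := by
            field_simp
          rw [h2]
          apply add_le_add
          · gcongr
            rwa [abs_sub_comm]
          · gcongr
            refine le_trans ?_ hR
            apply Finset.sum_le_sum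
            intro x _
            split
            · exact le_rfl
            · simp [abs_nonneg]
      _ = 2 * ε / P := by ring
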